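/- The unitary antipode R := S ∘ τ_{i/2} ∘ ϑ satisfies: R is ℂ-linear with R(1) = 1; R is anti-multiplicative, i.e. R(ab) = R(b)R(a) for all a, b ∈ 𝒜; R is star-preserving, i.e. R(a*) = R(a)* for all a ∈ 𝒜; R(α) = α*, R(α*) = α, R(γ) = −ζ^{1/2}·(conj(q)/|q|)·γ, R(γ*) = −ζ^{1/2}·(conj(q)/|q|)·γ*; R ∘ R = id on 𝒜; and h(R(a)) = h(a) for all a ∈ 𝒜. -/

import Mathlib

open scoped TensorProduct

noncomputable section

/-- The monomial family `α^n γ^m (γ*)^k` (for `n ≥ 0`) resp. `(α*)^{-n} γ^m (γ*)^k`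
(for `n < 0`), indexed by `(n, m, k) ∈ ℤ × ℕ × ℕ`. -/
def suqMono {A : Type*} [Ring A] [StarRing A] (a g : A) (i : ℤ × ℕ × ℕ) : A :=
  (if 0 ≤ i.1 then a ^ i.1.toNat else (star a) ^ (-i.1).toNat) * g ^ i.2.1 * (star g) ^ i.2.2

/-- The degree-`p` homogeneous component `𝒜_p`: the `ℂ`-span of the basis monomials with
`m - k = p`. -/
def suqHomog {A : Type*} [Ring A] [Algebra ℂ A] [StarRing A] (a g : A) (p : ℤ) :
    Submodule ℂ A :=
  Submodule.span ℂ
    {x | ∃ i : ℤ × ℕ × ℕ, (i.2.1 : ℤ) - (i.2.2 : ℤ) = p ∧ x = suqMono a g i}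

/-- The defining relations of `Pol(SU_q(2))`. -/
def SUqRel {A : Type*} [Ring A] [Algebra ℂ A] [StarRing A] (q : ℂ) (a g : A) : Prop :=
  star a * a + star g * g = 1 ∧
  a * star a + ((‖q‖ : ℂ) ^ 2) • (star g * g) = 1 ∧
  g * star g = star g * g ∧
  a * g = (starRingEnd ℂ q) • (g * a) ∧
  a * star g = q • (star g * a)

/-- The monomials form a `ℂ`-basis. -/
def SUqBasis {A : Type*} [Ring A] [Algebra ℂ A] [StarRing A] (a g : A) : Prop :=
  LinearIndependent ℂ (suqMono a g) ∧
  Submodule.span ℂ (Set.range (suqMono a g)) = ⊤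

/-- The characterizing properties of the antipode `S`. -/
def SUqAntipode {A : Type*} [Ring A] [Algebra ℂ A] [StarRing A] (q : ℂ) (a g : A)
    (S : A →ₗ[ℂ] A) : Prop :=
  S 1 = 1 ∧ S a = star a ∧ S (star a) = a ∧
  S g = (-(starRingEnd ℂ q)) • g ∧ S (star g) = (-q⁻¹) • star g ∧
  (∀ p : ℤ, ∀ x ∈ suqHomog a g p, S x ∈ suqHomog a g p) ∧
  (∀ p r : ℤ, ∀ x ∈ suqHomog a g p, ∀ y ∈ suqHomog a g r,
    S (x * y) = ((q / starRingEnd ℂ q) ^ (-(p * r))) • (S y * S x))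

/-- The braided multiplication on `𝒜 ⊗ 𝒜`. -/
def SUqBraidedMul {A : Type*} [Ring A] [Algebra ℂ A] [StarRing A] (q : ℂ) (a g : A)
    (μ : A ⊗[ℂ] A →ₗ[ℂ] A ⊗[ℂ] A →ₗ[ℂ] A ⊗[ℂ] A) : Prop :=
  ∀ (x w : A) (r s : ℤ), ∀ y ∈ suqHomog a g r, ∀ z ∈ suqHomog a g s,
    μ (x ⊗ₜ[ℂ] y) (z ⊗ₜ[ℂ] w)
      = ((q / starRingEnd ℂ q) ^ (-(r * s))) • ((x * z) ⊗ₜ[ℂ] (y * w))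

/-- The characterizing properties of the comultiplication `Δ` (as a unital algebra
homomorphism into the braided tensor square with multiplication `μ`). -/
def SUqComul {A : Type*} [Ring A] [Algebra ℂ A] [StarRing A] (q : ℂ) (a g : A)
    (μ : A ⊗[ℂ] A →ₗ[ℂ] A ⊗[ℂ] A →ₗ[ℂ] A ⊗[ℂ] A) (Δ : A →ₗ[ℂ] A ⊗[ℂ] A) : Prop :=
  Δ 1 = 1 ⊗ₜ[ℂ] 1 ∧ (∀ x y : A, Δ (x * y) = μ (Δ x) (Δ y)) ∧
  Δ a = a ⊗ₜ[ℂ] a - q • ((star g) ⊗ₜ[ℂ] g) ∧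
  Δ g = g ⊗ₜ[ℂ] a + (star a) ⊗ₜ[ℂ] g ∧
  Δ (star a) = (star a) ⊗ₜ[ℂ] (star a) - q • (g ⊗ₜ[ℂ] (star g)) ∧
  Δ (star g) = (star g) ⊗ₜ[ℂ] (star a) + a ⊗ₜ[ℂ] (star g)

/-- The braided flip `c` on `𝒜 ⊗ 𝒜`. -/
def SUqFlip {A : Type*} [Ring A] [Algebra ℂ A] [StarRing A] (q : ℂ) (a g : A)
    (c : A ⊗[ℂ] A →ₗ[ℂ] A ⊗[ℂ] A) : Prop :=
  ∀ (p r : ℤ), ∀ x ∈ suqHomog a g p, ∀ y ∈ suqHomog a g r,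
    c (x ⊗ₜ[ℂ] y) = ((q / starRingEnd ℂ q) ^ (-(p * r))) • (y ⊗ₜ[ℂ] x)

/-- The Haar functional, defined on the basis. -/
def SUqHaar {A : Type*} [Ring A] [Algebra ℂ A] [StarRing A] (q : ℂ) (a g : A)
    (h : A →ₗ[ℂ] ℂ) : Prop :=
  ∀ i : ℤ × ℕ × ℕ, h (suqMono a g i) =
    if i.1 = 0 ∧ i.2.1 = i.2.2
    then (1 - (‖q‖ : ℂ) ^ 2) / (1 - (‖q‖ : ℂ) ^ (2 * (i.2.1 + 1)))
    else 0

/-- The unitary antipode `R = S ∘ τ_{i/2} ∘ ϑ`, i.e. `R(x) = ζ^{p²/2}·|q|^{-p}·S(x)` for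
`x ∈ 𝒜_p` (principal branch `ζ^z = exp(z·Log ζ)`). -/
def SUqUnitaryAntipode {A : Type*} [Ring A] [Algebra ℂ A] [StarRing A] (q : ℂ) (a g : A)
    (S : A →ₗ[ℂ] A) (R : A →ₗ[ℂ] A) : Prop :=
  ∀ (p : ℤ), ∀ x ∈ suqHomog a g p,
    R x = (Complex.exp (((p : ℂ) ^ 2 / 2) * Complex.log (q / starRingEnd ℂ q)) *
      ((‖q‖ : ℂ) ^ (-p))) • S x




section GsAux
variable {w q qb Qa : ℂ}

private noncomputable def Gs (w q qb Qa : ℂ) (e0 e1 e2 e3 e4 : ℤ) : ℂ :=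
  (-1) ^ e0 * w ^ e1 * q ^ e2 * qb ^ e3 * Qa ^ e4

private lemma Gs_mul (hw : w ≠ 0) (hq : q ≠ 0) (hqb : qb ≠ 0) (hQa : Qa ≠ 0)
    (e0 e1 e2 e3 e4 f0 f1 f2 f3 f4 : ℤ) :
    Gs w q qb Qa e0 e1 e2 e3 e4 * Gs w q qb Qa f0 f1 f2 f3 f4
      = Gs w q qb Qa (e0 + f0) (e1 + f1) (e2 + f2) (e3 + f3) (e4 + f4) := by
  have hm : (-1 : ℂ) ≠ 0 := by norm_num
  simp only [Gs, zpow_add₀ hm, zpow_add₀ hw, zpow_add₀ hq, zpow_add₀ hqb, zpow_add₀ hQa]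
  ring

private lemma Gs_eq (hw : w ≠ 0) (hq : q ≠ 0) (hqb : qb ≠ 0) (hQa : Qa ≠ 0)
    (hw2 : w * w = q / qb) (hQa2 : Qa * Qa = q * qb)
    {e0 e1 e2 e3 e4 f0 f1 f2 f3 f4 : ℤ} (t0 t s : ℤ)
    (h0 : e0 = f0 + 2 * t0) (h1 : e1 = f1 + 2 * t)
    (h2 : e2 + t + s = f2) (h3 : e3 - t + s = f3) (h4 : e4 = f4 + 2 * s) :
    Gs w q qb Qa e0 e1 e2 e3 e4 = Gs w q qb Qa f0 f1 f2 f3 f4 := by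
  have hm : (-1 : ℂ) ≠ 0 := by norm_num
  have hmt : ∀ u : ℤ, (-1 : ℂ) ^ (2 * u) = 1 := by
    intro u
    rw [two_mul, zpow_add₀ hm, ← mul_zpow]
    norm_num
  have hwt : ∀ u : ℤ, w ^ (2 * u) = q ^ u * qb ^ (-u) := by
    intro u
    rw [two_mul, zpow_add₀ hw, ← mul_zpow, hw2, div_eq_mul_inv, mul_zpow, inv_zpow, ← zpow_neg]
  have hQt : ∀ u : ℤ, Qa ^ (2 * u) = q ^ u * qb ^ u := by
    intro u
    rw [two_mul, zpow_add₀ hQa, ← mul_zpow, hQa2, mul_zpow]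
  simp only [Gs]
  rw [h0, h1, h4, ← h2, ← h3, zpow_add₀ hm, zpow_add₀ hw, zpow_add₀ hQa, hmt, hwt, hQt,
    zpow_add₀ hq, zpow_add₀ hq, zpow_add₀ hqb (e3 - t) s, zpow_sub₀ hqb]
  field_simp
  ring_nf
  rw [← zpow_add₀ hqb, neg_add_cancel, zpow_zero]

private lemma Gs_one : Gs w q qb Qa 0 0 0 0 0 = 1 := by simp [Gs]

end GsAux

section XpAux
variable {A : Type*} [Ring A] [StarRing A]

private noncomputable def Xp (a : A) (n : ℤ) : A :=
  if 0 ≤ n then a ^ n.toNat else (star a) ^ (-n).toNat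

private lemma Xp_zero (a : A) : Xp a 0 = 1 := by simp [Xp]

private lemma Xp_one (a : A) : Xp a 1 = a := by simp [Xp]

private lemma Xp_negone (a : A) : Xp a (-1) = star a := by
  simp [Xp]

private lemma Xp_nonneg (a : A) {n : ℤ} (hn : 0 ≤ n) : Xp a n = a ^ n.toNat := if_pos hn

private lemma Xp_nonpos (a : A) {n : ℤ} (hn : n ≤ 0) : Xp a n = (star a) ^ (-n).toNat := by
  rcases eq_or_lt_of_le hn with h | h
  · subst h; simp [Xp]
  · exact if_neg (by omega)

private lemma Xp_succ (a : A) {n : ℤ} (hn : 0 ≤ n) : Xp a (n + 1) = Xp a n * a := by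
  rw [Xp_nonneg a hn, Xp_nonneg a (by omega), show (n + 1).toNat = n.toNat + 1 by omega,
    pow_succ]

private lemma Xp_pred (a : A) {n : ℤ} (hn : n ≤ 0) : Xp a (n - 1) = Xp a n * star a := by
  rw [Xp_nonpos a hn, Xp_nonpos a (by omega), show (-(n - 1)).toNat = (-n).toNat + 1 by omega,
    pow_succ]

private lemma Xp_star (a : A) (n : ℤ) : star (Xp a n) = Xp a (-n) := by
  rcases le_or_gt 0 n with hn | hn
  · rw [Xp_nonneg a hn, Xp_nonpos a (by omega), star_pow, neg_neg]
  · rw [Xp_nonpos a (le_of_lt hn), Xp_nonneg a (by omega), star_pow, star_star]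

private lemma Xp_comm_a (a : A) {n : ℤ} (hn : 0 ≤ n) : a * Xp a n = Xp a n * a := by
  rw [Xp_nonneg a hn]; exact ((Commute.refl a).pow_right _)

private lemma Xp_comm_star (a : A) {n : ℤ} (hn : n ≤ 0) :
    star a * Xp a n = Xp a n * star a := by
  rw [Xp_nonpos a hn]; exact ((Commute.refl (star a)).pow_right _)

end XpAux

private lemma suqMono_eq {A : Type*} [Ring A] [StarRing A] (a g : A) (i : ℤ × ℕ × ℕ) :
    suqMono a g i = Xp a i.1 * g ^ i.2.1 * (star g) ^ i.2.2 := rfl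

private lemma suqMono_def {A : Type*} [Ring A] [StarRing A] (a g : A) (n : ℤ) (m k : ℕ) :
    suqMono a g (n, m, k) = Xp a n * g ^ m * (star g) ^ k := rfl

set_option maxHeartbeats 2000000 in
/-- The unitary antipode `R := S∘τ_{i/2}∘ϑ` is unital, anti-multiplicative,
star-preserving, has the prescribed values on the generators, is involutive, and preserves
the Haar functional. -/
theorem suq_unitary_antipode_props {A : Type*} [Ring A] [Algebra ℂ A] [StarRing A]
    [StarModule ℂ A]
    (q : ℂ) (hq0 : 0 < ‖q‖) (hq1 : ‖q‖ < 1)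
    (a g : A) (hrel : SUqRel q a g) (hbasis : SUqBasis a g)
    (S : A →ₗ[ℂ] A) (hS : SUqAntipode q a g S)
    (R : A →ₗ[ℂ] A) (hR : SUqUnitaryAntipode q a g S R)
    (h : A →ₗ[ℂ] ℂ) (hh : SUqHaar q a g h) :
    R 1 = 1 ∧
    (∀ x y : A, R (x * y) = R y * R x) ∧
    (∀ x : A, R (star x) = star (R x)) ∧
    R a = star a ∧ R (star a) = a ∧
    R g = (-(Complex.exp ((1 / 2 : ℂ) * Complex.log (q / starRingEnd ℂ q)) *
      (starRingEnd ℂ q / (‖q‖ : ℂ)))) • g ∧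
    R (star g) = (-(Complex.exp ((1 / 2 : ℂ) * Complex.log (q / starRingEnd ℂ q)) *
      (starRingEnd ℂ q / (‖q‖ : ℂ)))) • star g ∧
    (∀ x : A, R (R x) = x) ∧
    (∀ x : A, h (R x) = h x) := by
  obtain ⟨rel1, rel2, rel3, rel4, rel5⟩ := hrel
  obtain ⟨S1, Sa, Sas, Sg, Sgs, Shom, Smul⟩ := hS
  set qb : ℂ := (starRingEnd ℂ) q with hqbdef
  have hq : q ≠ 0 := by
    intro h; rw [h] at hq0; simp at hq0
  have hqb0 : qb ≠ 0 := by simpa [hqbdef] using hq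
  set Qa : ℂ := ((‖q‖ : ℝ) : ℂ) with hQadef
  have hQa : Qa ≠ 0 := by
    simp only [hQadef, ne_eq, Complex.ofReal_eq_zero]
    exact hq0.ne'
  set w : ℂ := Complex.exp ((1 / 2 : ℂ) * Complex.log (q / qb)) with hwdef
  have hw : w ≠ 0 := Complex.exp_ne_zero _
  have hζ : q / qb ≠ 0 := div_ne_zero hq hqb0
  have hw2 : w * w = q / qb := by
    rw [hwdef, ← Complex.exp_add, ← two_mul, ← mul_assoc]
    norm_num
    exact Complex.exp_log hζ
  have hQa2 : Qa * Qa = q * qb := by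
    rw [hQadef, hqbdef, Complex.mul_conj, Complex.normSq_eq_norm_sq]
    push_cast
    ring
  -- monomial identifications
  have monoXn : ∀ n : ℤ, suqMono a g (n, 0, 0) = Xp a n := by
    intro n; simp [suqMono_eq]
  have monoGm : ∀ m : ℕ, suqMono a g (0, m, 0) = g ^ m := by
    intro m; simp [suqMono_eq, Xp_zero]
  have monoGsk : ∀ k : ℕ, suqMono a g (0, 0, k) = (star g) ^ k := by
    intro k; simp [suqMono_eq, Xp_zero]
  have monoGG : ∀ m k : ℕ, suqMono a g (0, m, k) = g ^ m * (star g) ^ k := by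
    intro m k; simp [suqMono_eq, Xp_zero]
  have mono1 : suqMono a g (0, 0, 0) = 1 := by simpa using monoXn 0 |>.trans (Xp_zero a)
  have memD : ∀ (i : ℤ × ℕ × ℕ) (p : ℤ), (i.2.1 : ℤ) - (i.2.2 : ℤ) = p →
      suqMono a g i ∈ suqHomog a g p := by
    intro i p hp
    exact Submodule.subset_span ⟨i, hp, rfl⟩
  have memXp : ∀ n : ℤ, Xp a n ∈ suqHomog a g 0 := by
    intro n; rw [← monoXn n]; exact memD _ 0 (by simp)
  have memGm : ∀ m : ℕ, g ^ m ∈ suqHomog a g m := by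
    intro m; rw [← monoGm m]; exact memD _ m (by simp)
  have memGsk : ∀ k : ℕ, (star g) ^ k ∈ suqHomog a g (-k) := by
    intro k; rw [← monoGsk k]; exact memD _ (-k) (by simp)
  have memGG : ∀ m k : ℕ, g ^ m * (star g) ^ k ∈ suqHomog a g ((m : ℤ) - k) := by
    intro m k; rw [← monoGG m k]; exact memD _ _ rfl
  -- commutation of g and star g
  have cggp : ∀ k m : ℕ, (star g) ^ k * g ^ m = g ^ m * (star g) ^ k := by
    intro k m
    exact (Commute.pow_pow (rel3.symm : Commute (star g) g) k m)
  -- derived relations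
  have rga : g * a = qb⁻¹ • (a * g) := by
    rw [rel4, smul_smul, inv_mul_cancel₀ hqb0, one_smul]
  have rgsa : star g * a = q⁻¹ • (a * star g) := by
    rw [rel5, smul_smul, inv_mul_cancel₀ hq, one_smul]
  have rgas : g * star a = qb • (star a * g) := by
    have h := congrArg star rel5
    simp only [star_mul, star_star, star_smul, Complex.star_def] at h
    exact h
  have rgsas : star g * star a = q • (star a * star g) := by
    have h := congrArg star rel4
    simp only [star_mul, star_star, star_smul, Complex.star_def, hqbdef, Complex.conj_conj] at h
    exact h
  have rasa : star a * a = 1 - star g * g := eq_sub_of_add_eq rel1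
  have raas : a * star a = 1 - (Qa ^ 2 : ℂ) • (star g * g) := eq_sub_of_add_eq rel2
  -- commuting powers of g, star g past Xp
  have GA : ∀ n : ℤ, g * Xp a n = qb ^ (-n) • (Xp a n * g) := by
    intro n
    induction n using Int.induction_on with
    | zero => simp [Xp_zero]
    | succ i ih =>
        rw [Xp_succ a (by positivity), ← mul_assoc, ih, smul_mul_assoc, mul_assoc, rga,
          mul_smul_comm, smul_smul, ← mul_assoc]
        congr 1
        rw [← zpow_neg_one qb, ← zpow_add₀ hqb0]
        congr 1
        ring
    | pred i ih =>
        rw [show (-(i : ℤ) - 1) = (-(i : ℤ)) - 1 by ring, Xp_pred a (by omega), ← mul_assoc,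
          ih, smul_mul_assoc, mul_assoc, rgas, mul_smul_comm, smul_smul, ← mul_assoc]
        congr 1
        rw [← zpow_add_one₀ hqb0]
        congr 1; ring
  have GSA : ∀ n : ℤ, star g * Xp a n = q ^ (-n) • (Xp a n * star g) := by
    intro n
    induction n using Int.induction_on with
    | zero => simp [Xp_zero]
    | succ i ih =>
        rw [Xp_succ a (by positivity), ← mul_assoc, ih, smul_mul_assoc, mul_assoc, rgsa,
          mul_smul_comm, smul_smul, ← mul_assoc]
        congr 1
        rw [← zpow_neg_one q, ← zpow_add₀ hq]
        congr 1
        ring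
    | pred i ih =>
        rw [show (-(i : ℤ) - 1) = (-(i : ℤ)) - 1 by ring, Xp_pred a (by omega), ← mul_assoc,
          ih, smul_mul_assoc, mul_assoc, rgsas, mul_smul_comm, smul_smul, ← mul_assoc]
        congr 1
        rw [← zpow_add_one₀ hq]
        congr 1; ring
  have GAm : ∀ (m : ℕ) (n : ℤ), g ^ m * Xp a n = qb ^ (-(m * n)) • (Xp a n * g ^ m) := by
    intro m
    induction m with
    | zero => intro n; simp
    | succ m ih =>
        intro n
        rw [pow_succ, mul_assoc, GA n, mul_smul_comm, ← mul_assoc, ih n, smul_mul_assoc,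
          smul_smul, mul_assoc, ← pow_succ]
        congr 1
        rw [← zpow_add₀ hqb0]
        congr 1
        push_cast
        ring
  have GSAm : ∀ (k : ℕ) (n : ℤ), (star g) ^ k * Xp a n = q ^ (-(k * n)) • (Xp a n * (star g) ^ k) := by
    intro k
    induction k with
    | zero => intro n; simp
    | succ k ih =>
        intro n
        rw [pow_succ, mul_assoc, GSA n, mul_smul_comm, ← mul_assoc, ih n, smul_mul_assoc,
          smul_smul, mul_assoc, ← pow_succ]
        congr 1
        rw [← zpow_add₀ hq]
        congr 1
        push_cast
        ring
  -- single-step scalar commutation helpers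
  have cg1m : ∀ m : ℕ, star g * g ^ m = g ^ m * star g := by
    intro m; simpa using cggp 1 m
  have cg1k : ∀ k : ℕ, (star g) ^ k * g = g * (star g) ^ k := by
    intro k; simpa using cggp k 1
  have ga_m : ∀ m : ℕ, g ^ m * a = qb ^ (-(m : ℤ)) • (a * g ^ m) := by
    intro m; have := GAm m 1; rw [Xp_one] at this; simpa using this
  have gsa_k : ∀ k : ℕ, (star g) ^ k * a = q ^ (-(k : ℤ)) • (a * (star g) ^ k) := by
    intro k; have := GSAm k 1; rw [Xp_one] at this; simpa using this
  have gas_m : ∀ m : ℕ, g ^ m * star a = qb ^ ((m : ℤ)) • (star a * g ^ m) := by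
    intro m; have := GAm m (-1); rw [Xp_negone] at this; simpa using this
  have gsas_k : ∀ k : ℕ, (star g) ^ k * star a = q ^ ((k : ℤ)) • (star a * (star g) ^ k) := by
    intro k; have := GSAm k (-1); rw [Xp_negone] at this; simpa using this
  -- Xp times generators
  have Xa_neg : ∀ n : ℤ, n < 0 → Xp a n * a = Xp a (n + 1) - Xp a (n + 1) * (star g * g) := by
    intro n hn
    have h1 : Xp a n = Xp a (n + 1) * star a := by
      have := Xp_pred a (show n + 1 ≤ 0 by omega)
      rw [show n + 1 - 1 = n by ring] at this
      exact this
    rw [h1, mul_assoc, rasa, mul_sub, mul_one]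
  have Xas_pos : ∀ n : ℤ, 0 < n →
      Xp a n * star a = Xp a (n - 1) - Qa ^ 2 • (Xp a (n - 1) * (star g * g)) := by
    intro n hn
    have h1 : Xp a n = Xp a (n - 1) * a := by
      have := Xp_succ a (show 0 ≤ n - 1 by omega)
      rw [show n - 1 + 1 = n by ring] at this
      exact this
    rw [h1, mul_assoc, raas, mul_sub, mul_one, mul_smul_comm]
  -- monomial times generators
  have mono_mul_g : ∀ (n : ℤ) (m k : ℕ),
      suqMono a g (n, m, k) * g = suqMono a g (n, m + 1, k) := by
    intro n m k
    simp only [suqMono_def]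
    rw [mul_assoc, cg1k k, ← mul_assoc, mul_assoc (Xp a n), ← pow_succ]
  have mono_mul_gs : ∀ (n : ℤ) (m k : ℕ),
      suqMono a g (n, m, k) * star g = suqMono a g (n, m, k + 1) := by
    intro n m k
    simp only [suqMono_def]
    rw [mul_assoc (Xp a n * g ^ m), ← pow_succ]
  have e2 : ∀ (n' : ℤ) (m k : ℕ),
      Xp a n' * (star g * g) * (g ^ m * (star g) ^ k) = suqMono a g (n', m + 1, k + 1) := by
    intro n' m k
    rw [suqMono_def, ← rel3]
    simp only [mul_assoc]
    congr 1
    rw [← mul_assoc (star g) (g ^ m), cg1m m, mul_assoc, ← pow_succ', ← mul_assoc, ← pow_succ']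
  have e1 : ∀ (n : ℤ) (m k : ℕ), suqMono a g (n, m, k) * a
      = (q ^ (-(k : ℤ)) * qb ^ (-(m : ℤ))) • (Xp a n * a * (g ^ m * (star g) ^ k)) := by
    intro n m k
    simp only [suqMono_def, mul_assoc]
    rw [gsa_k k]
    simp only [mul_smul_comm, smul_mul_assoc, smul_smul]
    rw [← mul_assoc (g ^ m) a ((star g) ^ k), ga_m m]
    simp only [mul_smul_comm, smul_mul_assoc, smul_smul, mul_assoc]
  have e1s : ∀ (n : ℤ) (m k : ℕ), suqMono a g (n, m, k) * star a
      = (q ^ ((k : ℤ)) * qb ^ ((m : ℤ))) • (Xp a n * star a * (g ^ m * (star g) ^ k)) := by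
    intro n m k
    simp only [suqMono_def, mul_assoc]
    rw [gsas_k k]
    simp only [mul_smul_comm, smul_mul_assoc, smul_smul]
    rw [← mul_assoc (g ^ m) (star a) ((star g) ^ k), gas_m m]
    simp only [mul_smul_comm, smul_mul_assoc, smul_smul, mul_assoc]
  -- multiplication closure for homogeneous components
  have mulg : ∀ (s : ℤ) (z : A), z ∈ suqHomog a g s → z * g ∈ suqHomog a g (s + 1) := by
    intro s z hz
    induction hz using Submodule.span_induction with
    | mem x hx =>
        obtain ⟨⟨n, m, k⟩, hdeg, rfl⟩ := hx
        rw [mono_mul_g]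
        exact memD _ _ (by push_cast at hdeg ⊢; omega)
    | zero => rw [zero_mul]; exact Submodule.zero_mem _
    | add x y hx hy ihx ihy => rw [add_mul]; exact Submodule.add_mem _ ihx ihy
    | smul c x hx ihx => rw [smul_mul_assoc]; exact Submodule.smul_mem _ c ihx
  have mulgs : ∀ (s : ℤ) (z : A), z ∈ suqHomog a g s → z * star g ∈ suqHomog a g (s - 1) := by
    intro s z hz
    induction hz using Submodule.span_induction with
    | mem x hx =>
        obtain ⟨⟨n, m, k⟩, hdeg, rfl⟩ := hx
        rw [mono_mul_gs]
        exact memD _ _ (by push_cast at hdeg ⊢; omega)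
    | zero => rw [zero_mul]; exact Submodule.zero_mem _
    | add x y hx hy ihx ihy => rw [add_mul]; exact Submodule.add_mem _ ihx ihy
    | smul c x hx ihx => rw [smul_mul_assoc]; exact Submodule.smul_mem _ c ihx
  have mula : ∀ (s : ℤ) (z : A), z ∈ suqHomog a g s → z * a ∈ suqHomog a g s := by
    intro s z hz
    induction hz using Submodule.span_induction with
    | mem x hx =>
        obtain ⟨⟨n, m, k⟩, hdeg, rfl⟩ := hx
        rw [e1 n m k]
        rcases le_or_gt 0 n with hn | hn
        · rw [← Xp_succ a hn, ← mul_assoc, ← suqMono_def]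
          exact Submodule.smul_mem _ _ (memD _ _ hdeg)
        · rw [Xa_neg n hn, sub_mul, e2]
          refine Submodule.smul_mem _ _ (Submodule.sub_mem _ ?_ ?_)
          · rw [← mul_assoc, ← suqMono_def]
            exact memD _ _ hdeg
          · exact memD _ _ (by push_cast at hdeg ⊢; omega)
    | zero => rw [zero_mul]; exact Submodule.zero_mem _
    | add x y hx hy ihx ihy => rw [add_mul]; exact Submodule.add_mem _ ihx ihy
    | smul c x hx ihx => rw [smul_mul_assoc]; exact Submodule.smul_mem _ c ihx
  have mulas : ∀ (s : ℤ) (z : A), z ∈ suqHomog a g s → z * star a ∈ suqHomog a g s := by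
    intro s z hz
    induction hz using Submodule.span_induction with
    | mem x hx =>
        obtain ⟨⟨n, m, k⟩, hdeg, rfl⟩ := hx
        rw [e1s n m k]
        rcases le_or_gt n 0 with hn | hn
        · have := Xp_pred a hn
          rw [← this, ← mul_assoc, ← suqMono_def]
          exact Submodule.smul_mem _ _ (memD _ _ hdeg)
        · rw [Xas_pos n hn, sub_mul, smul_mul_assoc, e2]
          refine Submodule.smul_mem _ _ (Submodule.sub_mem _ ?_ ?_)
          · rw [← mul_assoc, ← suqMono_def]
            exact memD _ _ hdeg
          · exact Submodule.smul_mem _ _ (memD _ _ (by push_cast at hdeg ⊢; omega))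
    | zero => rw [zero_mul]; exact Submodule.zero_mem _
    | add x y hx hy ihx ihy => rw [add_mul]; exact Submodule.add_mem _ ihx ihy
    | smul c x hx ihx => rw [smul_mul_assoc]; exact Submodule.smul_mem _ c ihx
  have mulXp : ∀ (n s : ℤ) (z : A), z ∈ suqHomog a g s → z * Xp a n ∈ suqHomog a g s := by
    intro n
    induction n using Int.induction_on with
    | zero => intro s z hz; rw [Xp_zero, mul_one]; exact hz
    | succ i ih =>
        intro s z hz
        rw [Xp_succ a (by positivity), ← mul_assoc]
        exact mula s _ (ih s z hz)
    | pred i ih =>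
        intro s z hz
        rw [show -(i : ℤ) - 1 = (-(i : ℤ)) - 1 by ring, Xp_pred a (by omega), ← mul_assoc]
        exact mulas s _ (ih s z hz)
  have mulGm : ∀ (m : ℕ) (s : ℤ) (z : A), z ∈ suqHomog a g s →
      z * g ^ m ∈ suqHomog a g (s + m) := by
    intro m
    induction m with
    | zero => intro s z hz; simpa using hz
    | succ m ih =>
        intro s z hz
        rw [pow_succ, ← mul_assoc, show ((m + 1 : ℕ) : ℤ) = (m : ℤ) + 1 by push_cast; ring,
          ← add_assoc]
        exact mulg _ _ (ih s z hz)
  have mulGsk : ∀ (k : ℕ) (s : ℤ) (z : A), z ∈ suqHomog a g s →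
      z * (star g) ^ k ∈ suqHomog a g (s - k) := by
    intro k
    induction k with
    | zero => intro s z hz; simpa using hz
    | succ k ih =>
        intro s z hz
        rw [pow_succ, ← mul_assoc, show ((k + 1 : ℕ) : ℤ) = (k : ℤ) + 1 by push_cast; ring,
          show s - ((k : ℤ) + 1) = s - k - 1 by ring]
        exact mulgs _ _ (ih s z hz)
  have mulmem : ∀ (p r : ℤ) (x : A), x ∈ suqHomog a g p → ∀ y ∈ suqHomog a g r,
      x * y ∈ suqHomog a g (p + r) := by
    intro p r x hx y hy
    induction hy using Submodule.span_induction with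
    | mem y' hy' =>
        obtain ⟨⟨n, m, k⟩, hdeg, rfl⟩ := hy'
        rw [suqMono_def, ← mul_assoc, ← mul_assoc]
        have h1 := mulXp n p x hx
        have h2 := mulGm m p _ h1
        have h3 := mulGsk k (p + m) _ h2
        have hdeg' : (m : ℤ) - k = r := hdeg
        rw [show p + r = p + m - k by omega]
        exact h3
    | zero => rw [mul_zero]; exact Submodule.zero_mem _
    | add y z hy hz ihy ihz => rw [mul_add]; exact Submodule.add_mem _ ihy ihz
    | smul c y hy ihy => rw [mul_smul_comm]; exact Submodule.smul_mem _ c ihy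
  -- Gs conversions
  have hzw : ∀ t : ℤ, (q / qb) ^ t = Gs w q qb Qa 0 (2 * t) 0 0 0 := by
    intro t
    rw [← hw2, mul_zpow, ← zpow_add₀ hw]
    simp [Gs, two_mul]
  have hqZ : ∀ t : ℤ, (q : ℂ) ^ t = Gs w q qb Qa 0 0 t 0 0 := by
    intro t; simp [Gs]
  have hqbZ : ∀ t : ℤ, (qb : ℂ) ^ t = Gs w q qb Qa 0 0 0 t 0 := by
    intro t; simp [Gs]
  have SgG : S g = Gs w q qb Qa 1 0 0 1 0 • g := by
    rw [Sg]; congr 1; simp [Gs]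
  have SgsG : S (star g) = Gs w q qb Qa 1 0 (-1) 0 0 • star g := by
    rw [Sgs]; congr 1; simp [Gs]
  have memA : a ∈ suqHomog a g 0 := by have := memXp 1; rwa [Xp_one] at this
  have memAs : star a ∈ suqHomog a g 0 := by have := memXp (-1); rwa [Xp_negone] at this
  have memG : g ∈ suqHomog a g 1 := by simpa using memGm 1
  have memGs : star g ∈ suqHomog a g (-1) := by simpa using memGsk 1
  -- S on the canonical pieces
  have SXp : ∀ n : ℤ, S (Xp a n) = Xp a (-n) := by
    intro n
    induction n using Int.induction_on with
    | zero => rw [Xp_zero, S1, neg_zero, Xp_zero]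
    | succ i ih =>
        rw [Xp_succ a (by positivity), Smul 0 0 _ (memXp i) a memA, Sa, ih]
        simp only [mul_zero, neg_zero, zpow_zero, one_smul]
        rw [Xp_comm_star a (by omega : -(i : ℤ) ≤ 0), ← Xp_pred a (by omega : -(i : ℤ) ≤ 0)]
        congr 1
        ring
    | pred i ih =>
        rw [show -(i : ℤ) - 1 = (-(i : ℤ)) - 1 by ring, Xp_pred a (by omega),
          Smul 0 0 _ (memXp (-(i : ℤ))) (star a) memAs, Sas, ih]
        simp only [mul_zero, neg_zero, zpow_zero, one_smul, neg_neg]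
        rw [Xp_comm_a a (by positivity : (0 : ℤ) ≤ (i : ℤ)),
          ← Xp_succ a (by positivity : (0 : ℤ) ≤ (i : ℤ))]
        congr 1
        ring
  have SGm : ∀ m : ℕ, S (g ^ m)
      = Gs w q qb Qa m (-(m * (m - 1))) 0 m 0 • g ^ m := by
    intro m
    induction m with
    | zero =>
        rw [pow_zero, S1]
        norm_num [Gs_one]
    | succ m ih =>
        rw [pow_succ, Smul m 1 _ (memGm m) g memG, SgG, ih, hzw]
        simp only [smul_mul_assoc, mul_smul_comm, smul_smul, ← pow_succ',
          Gs_mul hw hq hqb0 hQa]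
        congr 1
        · apply Gs_eq hw hq hqb0 hQa hw2 hQa2 0 0 0 <;> push_cast <;> ring
        · exact pow_succ _ _
  have SGsk : ∀ k : ℕ, S ((star g) ^ k)
      = Gs w q qb Qa k (-(k * (k - 1))) (-k) 0 0 • (star g) ^ k := by
    intro k
    induction k with
    | zero =>
        rw [pow_zero, S1]
        norm_num [Gs_one]
    | succ k ih =>
        rw [pow_succ, Smul (-k) (-1) _ (memGsk k) (star g) memGs, SgsG, ih, hzw]
        simp only [smul_mul_assoc, mul_smul_comm, smul_smul, ← pow_succ',
          Gs_mul hw hq hqb0 hQa]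
        congr 1
        · apply Gs_eq hw hq hqb0 hQa hw2 hQa2 0 0 0 <;> push_cast <;> ring
        · exact pow_succ _ _
  have SGG : ∀ m k : ℕ, S (g ^ m * (star g) ^ k)
      = Gs w q qb Qa (m + k) (2 * m * k - m * (m - 1) - k * (k - 1)) (-k) m 0
        • (g ^ m * (star g) ^ k) := by
    intro m k
    rw [Smul m (-k) _ (memGm m) _ (memGsk k), SGm, SGsk, hzw]
    simp only [smul_mul_assoc, mul_smul_comm, smul_smul, Gs_mul hw hq hqb0 hQa]
    rw [cggp k m]
    congr 1
    apply Gs_eq hw hq hqb0 hQa hw2 hQa2 0 0 0 <;> push_cast <;> ring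
  have Smono : ∀ (n : ℤ) (m k : ℕ), S (suqMono a g (n, m, k))
      = Gs w q qb Qa (m + k) (2 * m * k - m * (m - 1) - k * (k - 1)) (k * (n - 1))
          (m * (n + 1)) 0 • suqMono a g (-n, m, k) := by
    intro n m k
    have hx : suqMono a g (n, m, k) = Xp a n * (g ^ m * (star g) ^ k) := by
      rw [suqMono_def, mul_assoc]
    rw [hx, Smul 0 ((m : ℤ) - k) _ (memXp n) _ (memGG m k), SXp, SGG, hzw]
    simp only [smul_mul_assoc, smul_smul]
    rw [mul_assoc (g ^ m), GSAm k (-n), hqZ]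
    simp only [mul_smul_comm, smul_smul]
    rw [← mul_assoc (g ^ m) (Xp a (-n)), GAm m (-n), hqbZ]
    simp only [smul_mul_assoc, mul_smul_comm, smul_smul, Gs_mul hw hq hqb0 hQa]
    rw [← suqMono_def]
    congr 1
    apply Gs_eq hw hq hqb0 hQa hw2 hQa2 0 0 0 <;> push_cast <;> ring
  -- R on homogeneous elements, via Gs
  have Rhom : ∀ (p : ℤ) (x : A), x ∈ suqHomog a g p →
      R x = Gs w q qb Qa 0 (p ^ 2) 0 0 (-p) • S x := by
    intro p x hx
    have hCp : Complex.exp (((p : ℂ) ^ 2 / 2) * Complex.log (q / (starRingEnd ℂ) q)) *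
        ((‖q‖ : ℂ) ^ (-p)) = Gs w q qb Qa 0 (p ^ 2) 0 0 (-p) := by
      rw [show ((p : ℂ) ^ 2 / 2) * Complex.log (q / (starRingEnd ℂ) q)
          = ((p ^ 2 : ℤ) : ℂ) * ((1 / 2 : ℂ) * Complex.log (q / qb)) by
            rw [← hqbdef]; push_cast; ring,
        Complex.exp_int_mul, ← hwdef, ← hQadef]
      simp [Gs]
    rw [hR p x hx, hCp]
  have Rmono : ∀ (n : ℤ) (m k : ℕ), R (suqMono a g (n, m, k))
      = Gs w q qb Qa (m + k) (((m : ℤ) - k) ^ 2 + (2 * m * k - m * (m - 1) - k * (k - 1)))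
          (k * (n - 1)) (m * (n + 1)) (-((m : ℤ) - k)) • suqMono a g (-n, m, k) := by
    intro n m k
    rw [Rhom ((m : ℤ) - k) _ (memD (n, m, k) _ rfl), Smono, smul_smul, Gs_mul hw hq hqb0 hQa]
    congr 1
    apply Gs_eq hw hq hqb0 hQa hw2 hQa2 0 0 0 <;> push_cast <;> ring
  -- star of a monomial
  have starMono : ∀ (n : ℤ) (m k : ℕ), star (suqMono a g (n, m, k))
      = Gs w q qb Qa 0 0 (m * n) (k * n) 0 • suqMono a g (-n, k, m) := by
    intro n m k
    rw [suqMono_def]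
    simp only [star_mul, star_pow, star_star]
    rw [Xp_star a n, GSAm m (-n), hqZ]
    simp only [mul_smul_comm, smul_smul]
    rw [← mul_assoc (g ^ k), GAm k (-n), hqbZ]
    simp only [smul_mul_assoc, mul_smul_comm, smul_smul, Gs_mul hw hq hqb0 hQa]
    rw [← suqMono_def]
    congr 1
    apply Gs_eq hw hq hqb0 hQa hw2 hQa2 0 0 0 <;> push_cast <;> ring
  -- conjugation facts
  have hlog : (starRingEnd ℂ) (Complex.log (q / qb)) = - Complex.log (q / qb) := by
    have habs : ‖q / qb‖ = 1 := by
      rw [norm_div, hqbdef, Complex.norm_conj, div_self hq0.ne']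
    apply Complex.ext
    · rw [Complex.conj_re, Complex.neg_re, Complex.log_re, habs, Real.log_one, neg_zero]
    · simp
  have hcw : (starRingEnd ℂ) w = w⁻¹ := by
    have h2 : (starRingEnd ℂ) ((1 / 2 : ℂ) * Complex.log (q / qb))
        = -((1 / 2 : ℂ) * Complex.log (q / qb)) := by
      rw [map_mul, hlog, map_div₀, map_one, map_ofNat]
      ring
    rw [hwdef, ← Complex.exp_conj, h2, ← Complex.exp_neg]
  have hcq : (starRingEnd ℂ) q = qb := hqbdef.symm
  have hcqb : (starRingEnd ℂ) qb = q := by rw [hqbdef, Complex.conj_conj]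
  have hcQa : (starRingEnd ℂ) Qa = Qa := by rw [hQadef]; exact Complex.conj_ofReal _
  have Gs_conj : ∀ e0 e1 e2 e3 e4 : ℤ, (starRingEnd ℂ) (Gs w q qb Qa e0 e1 e2 e3 e4)
      = Gs w q qb Qa e0 (-e1) e3 e2 e4 := by
    intro e0 e1 e2 e3 e4
    simp only [Gs, map_mul, map_zpow₀, hcw, hcq, hcqb, hcQa, map_neg, map_one,
      inv_zpow, ← zpow_neg]
    ring
  -- span of all monomials is everything
  have memTop : ∀ x : A, x ∈ Submodule.span ℂ (Set.range (suqMono a g)) := by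
    intro x; rw [hbasis.2]; trivial
  -- Goal 1 : R 1 = 1
  have G1 : R 1 = 1 := by
    have h1 := Rmono 0 0 0
    rw [neg_zero, mono1] at h1
    rw [h1]
    convert one_smul ℂ (1 : A) using 2
    rw [← Gs_one (w := w) (q := q) (qb := qb) (Qa := Qa)]
    apply Gs_eq hw hq hqb0 hQa hw2 hQa2 0 0 0 <;> push_cast <;> ring
  -- Goals 4, 5 : R a = star a, R (star a) = a
  have monoA : suqMono a g (1, 0, 0) = a := by rw [monoXn 1, Xp_one]
  have monoAs : suqMono a g (-1, 0, 0) = star a := by rw [monoXn (-1), Xp_negone]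
  have G4 : R a = star a := by
    have h4 := Rmono 1 0 0
    rw [monoA, monoAs] at h4
    rw [h4]
    convert one_smul ℂ (star a) using 2
    rw [← Gs_one (w := w) (q := q) (qb := qb) (Qa := Qa)]
    apply Gs_eq hw hq hqb0 hQa hw2 hQa2 0 0 0 <;> push_cast <;> ring
  have G5 : R (star a) = a := by
    have h5 := Rmono (-1) 0 0
    rw [monoAs, neg_neg, monoA] at h5
    rw [h5]
    convert one_smul ℂ a using 2
    rw [← Gs_one (w := w) (q := q) (qb := qb) (Qa := Qa)]
    apply Gs_eq hw hq hqb0 hQa hw2 hQa2 0 0 0 <;> push_cast <;> ring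
  -- Goals 6, 7 : values on g, star g
  have monoG : suqMono a g (0, 1, 0) = g := by rw [monoGm 1, pow_one]
  have monoGs : suqMono a g (0, 0, 1) = star g := by rw [monoGsk 1, pow_one]
  have G6 : R g = (-(w * (qb / Qa))) • g := by
    have h6 := Rmono 0 1 0
    rw [neg_zero, monoG] at h6
    rw [h6]
    congr 1
    refine (Gs_eq hw hq hqb0 hQa hw2 hQa2 (f0 := 1) (f1 := 1) (f2 := 0) (f3 := 1)
      (f4 := -1) 0 0 0 (by push_cast; try ring) (by push_cast; try ring) (by push_cast; try ring)
      (by push_cast; try ring) (by push_cast; try ring)).trans ?_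
    simp only [Gs, zpow_one, zpow_zero, zpow_neg]
    ring
  have G7 : R (star g) = (-(w * (qb / Qa))) • star g := by
    have h7 := Rmono 0 0 1
    rw [neg_zero, monoGs] at h7
    rw [h7]
    congr 1
    refine (Gs_eq hw hq hqb0 hQa hw2 hQa2 (f0 := 1) (f1 := 1) (f2 := -1) (f3 := 0)
      (f4 := 1) 0 0 0 (by push_cast; try ring) (by push_cast; try ring) (by push_cast; try ring)
      (by push_cast; try ring) (by push_cast; try ring)).trans ?_
    simp only [Gs, zpow_one, zpow_zero, zpow_neg]
    field_simp
    linear_combination (-1 : ℂ) * hQa2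
  -- Goal 2 : anti-multiplicativity
  have Rmul_hom : ∀ (p r : ℤ) (x : A), x ∈ suqHomog a g p → ∀ y ∈ suqHomog a g r,
      R (x * y) = R y * R x := by
    intro p r x hx y hy
    rw [Rhom (p + r) _ (mulmem p r x hx y hy), Smul p r x hx y hy, Rhom r y hy, Rhom p x hx,
      hzw]
    simp only [smul_mul_assoc, mul_smul_comm, smul_smul, Gs_mul hw hq hqb0 hQa]
    congr 1
    apply Gs_eq hw hq hqb0 hQa hw2 hQa2 0 0 0 <;> push_cast <;> ring
  have Rmul_left : ∀ (j : ℤ × ℕ × ℕ) (x : A),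
      R (x * suqMono a g j) = R (suqMono a g j) * R x := by
    intro j x
    induction memTop x using Submodule.span_induction with
    | mem x hx =>
        obtain ⟨i, rfl⟩ := hx
        exact Rmul_hom _ _ _ (memD i _ rfl) _ (memD j _ rfl)
    | zero => simp
    | add x y hx hy ihx ihy => rw [add_mul, map_add, map_add, ihx, ihy, mul_add]
    | smul c x hx ihx => rw [smul_mul_assoc, map_smul, map_smul, ihx, mul_smul_comm]
  have G2 : ∀ x y : A, R (x * y) = R y * R x := by
    intro x y
    induction memTop y using Submodule.span_induction with
    | mem y hy =>
        obtain ⟨j, rfl⟩ := hy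
        exact Rmul_left j x
    | zero => simp
    | add y z hy hz ihy ihz => rw [mul_add, map_add, map_add, ihy, ihz, add_mul]
    | smul c y hy ihy => rw [mul_smul_comm, map_smul, map_smul, ihy, smul_mul_assoc]
  -- Goal 8 : involutivity
  have G8 : ∀ x : A, R (R x) = x := by
    intro x
    induction memTop x using Submodule.span_induction with
    | mem x hx =>
        obtain ⟨⟨n, m, k⟩, rfl⟩ := hx
        rw [Rmono n m k, map_smul, Rmono (-n) m k, neg_neg, smul_smul,
          Gs_mul hw hq hqb0 hQa]
        convert one_smul ℂ (suqMono a g (n, m, k)) using 2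
        rw [← Gs_one (w := w) (q := q) (qb := qb) (Qa := Qa)]
        apply Gs_eq hw hq hqb0 hQa hw2 hQa2 ((m : ℤ) + k) ((m : ℤ) + k) (-((m : ℤ) - k))
          <;> push_cast <;> ring
    | zero => simp
    | add x y hx hy ihx ihy => rw [map_add, map_add, ihx, ihy]
    | smul c x hx ihx => rw [map_smul, map_smul, ihx]
  -- Goal 3 : star-preservation
  have Rstar_mono : ∀ (n : ℤ) (m k : ℕ),
      R (star (suqMono a g (n, m, k))) = star (R (suqMono a g (n, m, k))) := by
    intro n m k
    rw [starMono n m k, map_smul, Rmono (-n) k m, Rmono n m k, star_smul, starMono (-n) m k,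
      neg_neg, smul_smul, smul_smul, Complex.star_def, Gs_conj, Gs_mul hw hq hqb0 hQa,
      Gs_mul hw hq hqb0 hQa]
    congr 1
    apply Gs_eq hw hq hqb0 hQa hw2 hQa2 0 ((m : ℤ) + k) ((m : ℤ) - k)
      <;> push_cast <;> ring
  have G3 : ∀ x : A, R (star x) = star (R x) := by
    intro x
    induction memTop x using Submodule.span_induction with
    | mem x hx =>
        obtain ⟨⟨n, m, k⟩, rfl⟩ := hx
        exact Rstar_mono n m k
    | zero => simp
    | add x y hx hy ihx ihy => rw [star_add, map_add, ihx, ihy, map_add, star_add]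
    | smul c x hx ihx => rw [star_smul, map_smul, ihx, map_smul, star_smul]
  -- Goal 9 : Haar invariance
  have Haar_mono : ∀ (n : ℤ) (m k : ℕ),
      h (R (suqMono a g (n, m, k))) = h (suqMono a g (n, m, k)) := by
    intro n m k
    rw [Rmono n m k, map_smul, smul_eq_mul, hh (-n, m, k), hh (n, m, k)]
    dsimp only
    by_cases hc : n = 0 ∧ m = k
    · obtain ⟨hn0, hmk⟩ := hc
      subst hn0
      subst hmk
      rw [neg_zero, if_pos ⟨rfl, rfl⟩]
      convert one_mul _ using 2
      rw [← Gs_one (w := w) (q := q) (qb := qb) (Qa := Qa)]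
      apply Gs_eq hw hq hqb0 hQa hw2 hQa2 (m : ℤ) (m : ℤ) 0 <;> push_cast <;> ring
    · rw [if_neg, if_neg hc, mul_zero]
      intro hc'
      exact hc ⟨neg_eq_zero.mp hc'.1, hc'.2⟩
  have G9 : ∀ x : A, h (R x) = h x := by
    intro x
    induction memTop x using Submodule.span_induction with
    | mem x hx =>
        obtain ⟨⟨n, m, k⟩, rfl⟩ := hx
        exact Haar_mono n m k
    | zero => simp
    | add x y hx hy ihx ihy => rw [map_add, map_add, map_add, ihx, ihy]
    | smul c x hx ihx => rw [map_smul, map_smul, map_smul, ihx]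
  exact ⟨G1, G2, G3, G4, G5, G6, G7, G8, G9⟩
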